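/- Let Λ = kQ/I be a bound quiver algebra such that I possesses a strict α-monomial Gröbner basis 𝒢_{p,q} for an arrow α, and let Γ = Λ/⟨ᾱ⟩. Then right multiplication by p induces isomorphisms of left modules Λ·𝔰(p) ≅ Λ·p̄ and Γ·𝔰(p) ≅ Γ·p̄, and left multiplication by q induces isomorphisms of right modules 𝔱(q)·Λ ≅ q̄·Λ and 𝔱(q)·Γ ≅ q̄·Γ. Here 𝔰(p) and 𝔱(q) denote the trivial paths (idempotents) at the source of p and the target of q, and p̄, q̄ the residue classes of p, q. -/

import Mathlib

/-! Scaffolding: path algebras of quivers, admissible ideals, monomial arrow removal,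
admissible orders and Gröbner bases, following Green. -/

open Quiver

/-- The type of all paths in a quiver `V` (with arbitrary source and target). -/
abbrev PathsIn (V : Type) [Quiver.{0} V] : Type := Σ a b : V, Quiver.Path a b

namespace PathsIn

variable {V : Type} [Quiver.{0} V]

/-- The length of a path. -/
def len (u : PathsIn V) : ℕ := u.2.2.length

/-- `u.Divides w` : the path `u` is a subpath of (divides) the path `w`,
i.e. `w = r·u·s` for (possibly trivial) paths `r`, `s`. -/
def Divides (u w : PathsIn V) : Prop :=
  ∃ (a d : V) (r : Quiver.Path a u.1) (s : Quiver.Path u.2.1 d),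
    w = ⟨a, d, (r.comp u.2.2).comp s⟩

/-- `u.ProperlyDivides w` : `u` is a proper subpath of `w`. -/
def ProperlyDivides (u w : PathsIn V) : Prop := u.Divides w ∧ u ≠ w

/-- `s.OverlapsLeftWith t` : the path `s` overlaps with the path `t` from the left,
i.e. `t = r₁·r₂` and `s = r₂·r₃` for paths `r₁, r₂, r₃` with `r₂` non-trivial.
(Equivalently, `t` overlaps with `s` from the right.) -/
def OverlapsLeftWith (s t : PathsIn V) : Prop :=
  ∃ (x : V) (r₁ : Quiver.Path t.1 x) (r₂ : Quiver.Path x t.2.1)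
    (r₃ : Quiver.Path t.2.1 s.2.1),
      0 < r₂.length ∧ t = ⟨t.1, t.2.1, r₁.comp r₂⟩ ∧ s = ⟨x, s.2.1, r₂.comp r₃⟩

end PathsIn

/-- The path of length one corresponding to an arrow. -/
def arrowPath {V : Type} [Quiver.{0} V] {a b : V} (α : a ⟶ b) : PathsIn V :=
  ⟨a, b, α.toPath⟩

/-- A path `w` avoids the arrow `α` if `α` is not a subpath of `w`. -/
def AvoidsArrow {V : Type} [Quiver.{0} V] {a b : V} (α : a ⟶ b) (w : PathsIn V) : Prop :=
  ¬ (arrowPath α).Divides w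

/-- `IsPathAlgebra k V A` : the `k`-algebra `A` is the path algebra `kQ` of the quiver `V`:
it has a `k`-basis indexed by the paths of `V`, multiplication of basis elements is given by
concatenation of composable paths (and is zero on non-composable ones), and the identity is
the sum of the trivial paths. -/
structure IsPathAlgebra (k : Type) [Field k] (V : Type) [Quiver.{0} V] [Fintype V]
    (A : Type) [Ring A] [Algebra k A] : Type where
  basis : Module.Basis (PathsIn V) k A
  mul_matched : ∀ {a b c : V} (p : Quiver.Path a b) (q : Quiver.Path b c),
    basis ⟨a, b, p⟩ * basis ⟨b, c, q⟩ = basis ⟨a, c, p.comp q⟩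
  mul_unmatched : ∀ {a b b' c : V} (p : Quiver.Path a b) (q : Quiver.Path b' c),
    b ≠ b' → basis ⟨a, b, p⟩ * basis ⟨b', c, q⟩ = 0
  one_def : (1 : A) = ∑ a : V, basis ⟨a, a, Quiver.Path.nil⟩

namespace IsPathAlgebra

variable {k : Type} [Field k] {V : Type} [Quiver.{0} V] [Fintype V]
  {A : Type} [Ring A] [Algebra k A]

/-- The path `u` occurs in the element `z` of the path algebra (i.e. `u` has a non-zero
coefficient in `z`). -/
def OccursIn (PA : IsPathAlgebra k V A) (u : PathsIn V) (z : A) : Prop :=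
  PA.basis.repr z u ≠ 0

/-- The path `u` occurs in the subset `T` of the path algebra. -/
def OccursInSet (PA : IsPathAlgebra k V A) (u : PathsIn V) (T : Set A) : Prop :=
  ∃ z ∈ T, PA.OccursIn u z

/-- An element of the path algebra avoids the arrow `α` if every path occurring in it does. -/
def ElemAvoids (PA : IsPathAlgebra k V A) {a b : V} (α : a ⟶ b) (z : A) : Prop :=
  ∀ u : PathsIn V, PA.OccursIn u z → AvoidsArrow α u

/-- A relation: a linear combination of paths of length at least two having a common source
and a common target. -/
def IsRelation (PA : IsPathAlgebra k V A) (z : A) : Prop :=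
  (∀ u : PathsIn V, PA.OccursIn u z → 2 ≤ u.len) ∧
  (∀ u v : PathsIn V, PA.OccursIn u z → PA.OccursIn v z → u.1 = v.1 ∧ u.2.1 = v.2.1)

end IsPathAlgebra

/-- The two-sided ideal of a ring generated by a subset, as a set: the additive closure of
the set of elements `r * t * s` with `t` in the generating set. -/
def ringIdealSpan {A : Type} [Ring A] (T : Set A) : Set A :=
  (AddSubgroup.closure {y : A | ∃ r s : A, ∃ t ∈ T, y = r * t * s} : AddSubgroup A)

/-- An admissible ideal of the path algebra: a two-sided ideal `I` with `J^n ⊆ I ⊆ J²`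
for some `n`, where `J` is the arrow ideal. -/
def IsAdmissibleIdeal {k : Type} [Field k] {V : Type} [Quiver.{0} V] [Fintype V]
    {A : Type} [Ring A] [Algebra k A] (PA : IsPathAlgebra k V A) (I : Set A) : Prop :=
  I = ringIdealSpan I ∧
  (∃ n : ℕ, ∀ u : PathsIn V, n ≤ u.len → PA.basis u ∈ I) ∧
  (∀ z ∈ I, ∀ u : PathsIn V, PA.OccursIn u z → 2 ≤ u.len)

/-- A presentation of the quotient of an algebra `A` by (the set underlying) a two-sided
ideal `I`: a surjective algebra homomorphism with kernel `I`. -/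
structure QuotPresentation (k : Type) [Field k] {A : Type} [Ring A] [Algebra k A]
    (I : Set A) (B : Type) [Ring B] [Algebra k B] : Type where
  proj : A →ₐ[k] B
  surj : Function.Surjective proj
  ker : ∀ z : A, proj z = 0 ↔ z ∈ I

section StrictMonomial

variable {k : Type} [Field k] {V : Type} [Quiver.{0} V] [Fintype V]
  {A : Type} [Ring A] [Algebra k A]

/-- The path `pαq`. -/
def pathPAQ {V : Type} [Quiver.{0} V] {va vb xp yq : V} (α : va ⟶ vb)
    (p : Quiver.Path xp va) (q : Quiver.Path vb yq) : PathsIn V :=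
  ⟨xp, yq, (p.comp α.toPath).comp q⟩

/-- Properties (P) for a subset `T` of the path algebra, relative to the arrow `α` and the
paths `p`, `q`:  (P1) every element of `T` other than `pαq` avoids `α`;
(P2) `p` does not overlap from the left with any path occurring in `T`;
(P2ᵒᵖ) `q` does not overlap from the right with any path occurring in `T`;
(P3) no path occurring in `T` divides `p` or `q`. -/
structure SatisfiesP (PA : IsPathAlgebra k V A) {va vb xp yq : V} (α : va ⟶ vb)
    (T : Set A) (p : Quiver.Path xp va) (q : Quiver.Path vb yq) : Prop where
  p1 : ∀ z ∈ T, z ≠ PA.basis (pathPAQ α p q) → PA.ElemAvoids α z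
  p2 : ∀ u : PathsIn V, PA.OccursInSet u T →
    ¬ PathsIn.OverlapsLeftWith ⟨xp, va, p⟩ u
  p2op : ∀ u : PathsIn V, PA.OccursInSet u T →
    ¬ PathsIn.OverlapsLeftWith u ⟨vb, yq, q⟩
  p3 : ∀ u : PathsIn V, PA.OccursInSet u T →
    ¬ u.Divides ⟨xp, va, p⟩ ∧ ¬ u.Divides ⟨vb, yq, q⟩

/-- The common context for (strict) `α`-monomial generating sets: `p`, `q` avoid `α`,
at most one of them is trivial, and `T` is a finite generating set of relations for `I`. -/
structure IsMonGenData (PA : IsPathAlgebra k V A) {va vb xp yq : V} (α : va ⟶ vb)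
    (I : Set A) (T : Set A) (p : Quiver.Path xp va) (q : Quiver.Path vb yq) : Prop where
  finite : T.Finite
  rels : ∀ t ∈ T, PA.IsRelation t
  gen : I = ringIdealSpan T
  p_avoids : AvoidsArrow α (⟨xp, va, p⟩ : PathsIn V)
  q_avoids : AvoidsArrow α (⟨vb, yq, q⟩ : PathsIn V)
  not_both_trivial : 0 < p.length ∨ 0 < q.length

/-- `T` is a strict `α`-monomial generating set for the ideal `I`, relative to the paths
`p` and `q`. -/
structure IsStrictMonomialGenSet (PA : IsPathAlgebra k V A) {va vb xp yq : V} (α : va ⟶ vb)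
    (I : Set A) (T : Set A) (p : Quiver.Path xp va) (q : Quiver.Path vb yq) : Prop where
  data : IsMonGenData PA α I T p q
  mem : PA.basis (pathPAQ α p q) ∈ T
  others_avoid : ∀ z ∈ T, z ≠ PA.basis (pathPAQ α p q) → PA.ElemAvoids α z
  no_proper_sub : ∀ u : PathsIn V, u.ProperlyDivides (pathPAQ α p q) → PA.basis u ∉ I
  no_overlap_p : ∀ u : PathsIn V, PA.OccursInSet u T →
    ¬ PathsIn.OverlapsLeftWith ⟨xp, va, p⟩ u
  no_overlap_q : ∀ u : PathsIn V, PA.OccursInSet u T →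
    ¬ PathsIn.OverlapsLeftWith u ⟨vb, yq, q⟩
  no_divide : ∀ u : PathsIn V, PA.OccursInSet u T →
    ¬ u.Divides ⟨xp, va, p⟩ ∧ ¬ u.Divides ⟨vb, yq, q⟩

/-- `T` is an `α`-monomial generating set: every element of `T` which is not (a scalar
multiple of) a path avoids `α`. -/
structure IsMonomialGenSet (PA : IsPathAlgebra k V A) {va vb : V} (α : va ⟶ vb)
    (I : Set A) (T : Set A) : Prop where
  finite : T.Finite
  rels : ∀ t ∈ T, PA.IsRelation t
  gen : I = ringIdealSpan T
  mono : ∀ t ∈ T, (∃ (u : PathsIn V) (c : k), c ≠ 0 ∧ t = c • PA.basis u) ∨ PA.ElemAvoids α t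

end StrictMonomial

section Groebner

variable {k : Type} [Field k] {V : Type} [Quiver.{0} V] [Fintype V]
  {A : Type} [Ring A] [Algebra k A]

/-- An admissible order on the set of paths of a quiver: a well-order compatible with left
and right multiplication, for which every subpath of a path precedes it. -/
structure AdmissibleOrder (V : Type) [Quiver.{0} V] : Type 1 where
  le : PathsIn V → PathsIn V → Prop
  refl : ∀ u, le u u
  trans : ∀ u v w, le u v → le v w → le u w
  antisymm : ∀ u v, le u v → le v u → u = v
  total : ∀ u v, le u v ∨ le v u
  wf : WellFounded (fun u w => le u w ∧ u ≠ w)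
  right_compat : ∀ (u w : PathsIn V), le u w → ∀ (hc : u.2.1 = w.2.1) (z : V)
    (r : Quiver.Path w.2.1 z),
      le ⟨u.1, z, u.2.2.comp (r.cast hc.symm rfl)⟩ ⟨w.1, z, w.2.2.comp r⟩
  left_compat : ∀ (u w : PathsIn V), le u w → ∀ (hc : u.1 = w.1) (z : V)
    (r : Quiver.Path z w.1),
      le ⟨z, u.2.1, (r.cast rfl hc.symm).comp u.2.2⟩ ⟨z, w.2.1, r.comp w.2.2⟩
  subpath_le : ∀ u w, PathsIn.Divides u w → le u w

/-- `IsTip PA O z u` : the path `u` is the `O`-largest path occurring in `z`. -/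
def IsTip (PA : IsPathAlgebra k V A) (O : AdmissibleOrder V) (z : A) (u : PathsIn V) : Prop :=
  PA.OccursIn u z ∧ ∀ w : PathsIn V, PA.OccursIn w z → O.le w u

/-- `G` is a Gröbner basis for the ideal `I` with respect to the admissible order `O`:
`G ⊆ I` and the tip of every non-zero element of `I` is divisible by the tip of some
element of `G`. -/
def IsGroebnerBasis (PA : IsPathAlgebra k V A) (O : AdmissibleOrder V)
    (I : Set A) (G : Set A) : Prop :=
  G ⊆ I ∧ ∀ z ∈ I, z ≠ 0 → ∃ g ∈ G, ∃ tg tz : PathsIn V,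
    IsTip PA O g tg ∧ IsTip PA O z tz ∧ tg.Divides tz

/-- A strict `α`-monomial Gröbner basis for `I`, relative to the paths `p`, `q` (which
avoid `α`, have the appropriate endpoints, and at most one of which is trivial):
`pαq ∈ 𝒢`, every other element of `𝒢` avoids `α`, and no tip of an element of `𝒢`
overlaps with `p` from the right, overlaps with `q` from the left, or divides `p` or `q`. -/
structure IsStrictMonomialGB (PA : IsPathAlgebra k V A) (O : AdmissibleOrder V)
    {va vb xp yq : V} (α : va ⟶ vb) (I : Set A) (G : Set A)
    (p : Quiver.Path xp va) (q : Quiver.Path vb yq) : Prop where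
  gb : IsGroebnerBasis PA O I G
  p_avoids : AvoidsArrow α (⟨xp, va, p⟩ : PathsIn V)
  q_avoids : AvoidsArrow α (⟨vb, yq, q⟩ : PathsIn V)
  not_both_trivial : 0 < p.length ∨ 0 < q.length
  mem : PA.basis (pathPAQ α p q) ∈ G
  others_avoid : ∀ z ∈ G, z ≠ PA.basis (pathPAQ α p q) → PA.ElemAvoids α z
  tips_no_overlap_p : ∀ g ∈ G, ∀ u : PathsIn V, IsTip PA O g u →
    ¬ PathsIn.OverlapsLeftWith ⟨xp, va, p⟩ u
  tips_no_overlap_q : ∀ g ∈ G, ∀ u : PathsIn V, IsTip PA O g u →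
    ¬ PathsIn.OverlapsLeftWith u ⟨vb, yq, q⟩
  tips_no_divide : ∀ g ∈ G, ∀ u : PathsIn V, IsTip PA O g u →
    ¬ u.Divides ⟨xp, va, p⟩ ∧ ¬ u.Divides ⟨vb, yq, q⟩

end Groebner
section PartA

open Quiver

variable {V : Type} [Quiver.{0} V]

namespace Quiver.Path

theorem comp_eq_comp_suffix {a b b' : V} (p : Path a b) (r : Path a b') :
    ∀ {c : V} (q : Path b c) (s : Path b' c), p.comp q = r.comp s → q.length ≤ s.length →
      ∃ t : Path b' b, p = r.comp t ∧ s = t.comp q := by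
  intro c q
  induction q with
  | nil =>
      intro s h hl
      exact ⟨s, by simpa using h, (s.comp_nil).symm⟩
  | cons q' e ih =>
      intro s h hl
      cases s with
      | nil =>
          exfalso
          simp [Path.length] at hl
      | cons s' f =>
          rw [comp_cons, comp_cons] at h
          have hobj := obj_eq_of_cons_eq_cons h
          subst hobj
          have h1 : p.comp q' = r.comp s' := eq_of_heq (heq_of_cons_eq_cons h)
          have he : e = f := eq_of_heq (hom_heq_of_cons_eq_cons h)
          subst he
          have hl' : q'.length ≤ s'.length := by
            simp only [Path.length_cons] at hl; omega
          obtain ⟨t, ht1, ht2⟩ := ih s' h1 hl'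
          exact ⟨t, ht1, by rw [comp_cons, ht2]⟩

theorem comp_eq_comp_prefix {a b b' c : V} (p : Path a b) (q : Path b c)
    (r : Path a b') (s : Path b' c) (h : p.comp q = r.comp s) (hl : p.length ≤ r.length) :
    ∃ t : Path b b', r = p.comp t ∧ q = t.comp s := by
  have hlen : p.length + q.length = r.length + s.length := by
    rw [← length_comp, ← length_comp, h]
  have hl' : s.length ≤ q.length := by omega
  exact comp_eq_comp_suffix r p s q h.symm hl'

end Quiver.Path

namespace PathsIn

theorem mk_inj {a b a' b' : V} {x : Quiver.Path a b} {x' : Quiver.Path a' b'}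
    (h : (⟨a, b, x⟩ : PathsIn V) = ⟨a', b', x'⟩) :
    ∃ (_ : a = a') (_ : b = b'), HEq x x' := by
  obtain ⟨h1, h2⟩ := Sigma.mk.inj_iff.mp h
  subst h1
  obtain ⟨h3, h4⟩ := Sigma.mk.inj_iff.mp (eq_of_heq h2)
  subst h3
  exact ⟨rfl, rfl, h4⟩

theorem mk_eq {a b a' b' : V} (h1 : a = a') (h2 : b = b') {x : Quiver.Path a b}
    {x' : Quiver.Path a' b'} (h : HEq x x') : (⟨a, b, x⟩ : PathsIn V) = ⟨a', b', x'⟩ := by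
  subst h1; subst h2; rw [eq_of_heq h]

@[simp] theorem eta (u : PathsIn V) : (⟨u.1, u.2.1, u.2.2⟩ : PathsIn V) = u := rfl

/-- Concatenation of composable elements of `PathsIn`. -/
def concat (u v : PathsIn V) (h : u.2.1 = v.1) : PathsIn V :=
  ⟨u.1, v.2.1, u.2.2.comp (v.2.2.cast h.symm rfl)⟩

theorem concat_nil_right (u : PathsIn V) {x : V} (h : u.2.1 = x) :
    concat u ⟨x, x, Quiver.Path.nil⟩ h = u := by
  obtain ⟨a, b, d⟩ := u
  obtain rfl : b = x := h
  simp [concat, Quiver.Path.cast_rfl_rfl]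

theorem concat_nil_left (u : PathsIn V) {x : V} (h : x = u.1) :
    concat (⟨x, x, Quiver.Path.nil⟩ : PathsIn V) u h = u := by
  obtain ⟨a, b, d⟩ := u
  obtain rfl : x = a := h
  simp [concat, Quiver.Path.cast_rfl_rfl, Quiver.Path.nil_comp]

theorem len_concat (u v : PathsIn V) (h : u.2.1 = v.1) :
    (concat u v h).len = u.len + v.len := by
  obtain ⟨a, b, d⟩ := u; obtain ⟨a', b', d'⟩ := v
  obtain rfl : b = a' := h
  simp [concat, len, Quiver.Path.cast_rfl_rfl, Quiver.Path.length_comp]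

theorem Divides.refl (u : PathsIn V) : u.Divides u :=
  ⟨u.1, u.2.1, Quiver.Path.nil, Quiver.Path.nil, by
    obtain ⟨a, b, d⟩ := u; simp [Quiver.Path.nil_comp]⟩

theorem Divides.concat_right {d u : PathsIn V} (hd : d.Divides u)
    (v : PathsIn V) (h : u.2.1 = v.1) : d.Divides (concat u v h) := by
  obtain ⟨au, bu, du⟩ := u; obtain ⟨av, bv, dv⟩ := v
  obtain rfl : bu = av := h
  obtain ⟨a0, d0, r, s, hw⟩ := hd
  obtain ⟨rfl, rfl, h3⟩ := mk_inj hw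
  have h3' := eq_of_heq h3
  refine ⟨_, bv, r, s.comp dv, ?_⟩
  simp only [concat, Quiver.Path.cast_rfl_rfl]
  rw [h3', Quiver.Path.comp_assoc, Quiver.Path.comp_assoc]

theorem Divides.concat_left {d v : PathsIn V} (hd : d.Divides v)
    (u : PathsIn V) (h : u.2.1 = v.1) : d.Divides (concat u v h) := by
  obtain ⟨au, bu, du⟩ := u; obtain ⟨av, bv, dv⟩ := v
  obtain rfl : bu = av := h
  obtain ⟨a0, d0, r, s, hw⟩ := hd
  obtain ⟨rfl, rfl, h3⟩ := mk_inj hw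
  have h3' := eq_of_heq h3
  refine ⟨au, _, du.comp r, s, ?_⟩
  simp only [concat, Quiver.Path.cast_rfl_rfl]
  rw [h3', ← Quiver.Path.comp_assoc, ← Quiver.Path.comp_assoc]

/-- Master decomposition: a divisor of a composite divides the left factor, the right
factor, or straddles the junction with nontrivial overlap on both sides. -/
theorem divides_comp_cases {u : PathsIn V} {a b c : V} {x : Quiver.Path a b}
    {y : Quiver.Path b c} (h : u.Divides ⟨a, c, x.comp y⟩) :
    u.Divides ⟨a, b, x⟩ ∨ u.Divides ⟨b, c, y⟩ ∨
    ∃ (w : V) (x₁ : Quiver.Path a w) (a₂ : Quiver.Path w b) (b₂ : Quiver.Path b u.2.1)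
      (y₂ : Quiver.Path u.2.1 c),
        0 < a₂.length ∧ 0 < b₂.length ∧ x = x₁.comp a₂ ∧ y = b₂.comp y₂ ∧
        u = ⟨w, u.2.1, a₂.comp b₂⟩ := by
  obtain ⟨u1, u2, d⟩ := u
  obtain ⟨a0, d0, r, s, hw⟩ := h
  dsimp only at r s hw ⊢
  obtain ⟨rfl, rfl, h3⟩ := mk_inj hw
  have key : x.comp y = r.comp (d.comp s) := by
    rw [eq_of_heq h3, Quiver.Path.comp_assoc]
  by_cases hxr : x.length ≤ r.length
  · obtain ⟨t, ht1, ht2⟩ := Quiver.Path.comp_eq_comp_prefix x y r (d.comp s) key hxr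
    right; left
    exact ⟨b, _, t, s, by rw [ht2, Quiver.Path.comp_assoc]⟩
  · by_cases hys : y.length ≤ s.length
    · obtain ⟨t, ht1, ht2⟩ := Quiver.Path.comp_eq_comp_suffix x (r.comp d) y s
        (by rw [key, Quiver.Path.comp_assoc]) hys
      left
      exact ⟨a, b, r, t, by rw [ht1]⟩
    · push_neg at hxr hys
      obtain ⟨t₁, ht11, ht12⟩ := Quiver.Path.comp_eq_comp_prefix r (d.comp s) x y
        key.symm (le_of_lt hxr)
      obtain ⟨t₂, ht21, ht22⟩ := Quiver.Path.comp_eq_comp_suffix d t₁ s y ht12 (le_of_lt hys)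
      right; right
      refine ⟨u1, r, t₁, t₂, s, ?_, ?_, ht11, ht22, by rw [ht21]⟩
      · have := congrArg Quiver.Path.length ht11
        rw [Quiver.Path.length_comp] at this
        omega
      · have := congrArg Quiver.Path.length ht22
        rw [Quiver.Path.length_comp] at this
        omega

theorem divides_comp_cases_of_len_one {u : PathsIn V} (hu : u.len = 1) {a b c : V}
    {x : Quiver.Path a b} {y : Quiver.Path b c} (h : u.Divides ⟨a, c, x.comp y⟩) :
    u.Divides ⟨a, b, x⟩ ∨ u.Divides ⟨b, c, y⟩ := by
  rcases divides_comp_cases h with h1 | h1 | ⟨w, x₁, a₂, b₂, y₂, ha, hb, _, _, hu'⟩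
  · exact Or.inl h1
  · exact Or.inr h1
  · exfalso
    have h2 := congrArg PathsIn.len hu'
    rw [hu] at h2
    simp only [len, Quiver.Path.length_comp] at h2
    omega

end PathsIn

@[simp] theorem arrowPath_len {a b : V} (α : a ⟶ b) : (arrowPath α).len = 1 := rfl

theorem arrowPath_divides_pathPAQ {va vb xp yq : V} (α : va ⟶ vb)
    (p : Quiver.Path xp va) (q : Quiver.Path vb yq) :
    (arrowPath α).Divides (pathPAQ α p q) :=
  ⟨xp, yq, p, q, rfl⟩

end PartA
section PartB

open Quiver

variable {k : Type} [Field k] {V : Type} [Quiver.{0} V] [Fintype V]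
  {A : Type} [Ring A] [Algebra k A]

namespace IsPathAlgebra

theorem repr_sum_eq (PA : IsPathAlgebra k V A) (z : A) :
    ∑ u ∈ (PA.basis.repr z).support, PA.basis.repr z u • PA.basis u = z := by
  have h := PA.basis.linearCombination_repr z
  rwa [Finsupp.linearCombination_apply, Finsupp.sum] at h

theorem expand_mulR (PA : IsPathAlgebra k V A) (z y : A) (w : PathsIn V) :
    PA.basis.repr (z * y) w = ∑ u ∈ (PA.basis.repr z).support,
      PA.basis.repr z u * PA.basis.repr (PA.basis u * y) w := by
  conv_lhs => rw [← repr_sum_eq PA z]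
  rw [Finset.sum_mul, map_sum, Finsupp.finset_sum_apply]
  refine Finset.sum_congr rfl fun u _ => ?_
  rw [smul_mul_assoc, map_smul, Finsupp.smul_apply, smul_eq_mul]

theorem expand_mulL (PA : IsPathAlgebra k V A) (y z : A) (w : PathsIn V) :
    PA.basis.repr (y * z) w = ∑ v ∈ (PA.basis.repr z).support,
      PA.basis.repr z v * PA.basis.repr (y * PA.basis v) w := by
  conv_lhs => rw [← repr_sum_eq PA z]
  rw [Finset.mul_sum, map_sum, Finsupp.finset_sum_apply]
  refine Finset.sum_congr rfl fun u _ => ?_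
  rw [mul_smul_comm, map_smul, Finsupp.smul_apply, smul_eq_mul]

theorem basis_mul_basis_matched (PA : IsPathAlgebra k V A) (u v : PathsIn V)
    (h : u.2.1 = v.1) : PA.basis u * PA.basis v = PA.basis (PathsIn.concat u v h) := by
  obtain ⟨a, b, x⟩ := u; obtain ⟨a', b', y⟩ := v
  obtain rfl : b = a' := h
  rw [PA.mul_matched x y]
  simp [PathsIn.concat, Quiver.Path.cast_rfl_rfl]

theorem basis_mul_basis_unmatched (PA : IsPathAlgebra k V A) (u v : PathsIn V)
    (h : u.2.1 ≠ v.1) : PA.basis u * PA.basis v = 0 := by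
  obtain ⟨a, b, x⟩ := u; obtain ⟨a', b', y⟩ := v
  exact PA.mul_unmatched x y h

theorem concat_inj_left {V : Type} [Quiver.{0} V] {u u' v : PathsIn V}
    (h : u.2.1 = v.1) (h' : u'.2.1 = v.1)
    (he : PathsIn.concat u v h = PathsIn.concat u' v h') : u = u' := by
  obtain ⟨a, b, x⟩ := u; obtain ⟨a', b', x'⟩ := u'; obtain ⟨av, bv, y⟩ := v
  obtain rfl : b = av := h
  obtain rfl : b' = b := h'
  simp only [PathsIn.concat, Quiver.Path.cast_rfl_rfl] at he
  obtain ⟨rfl, -, h3⟩ := PathsIn.mk_inj he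
  have := Quiver.Path.comp_injective_left y (eq_of_heq h3)
  rw [this]

theorem concat_inj_right {V : Type} [Quiver.{0} V] {u v v' : PathsIn V}
    (h : u.2.1 = v.1) (h' : u.2.1 = v'.1)
    (he : PathsIn.concat u v h = PathsIn.concat u v' h') : v = v' := by
  obtain ⟨a, b, x⟩ := u; obtain ⟨av, bv, y⟩ := v; obtain ⟨av', bv', y'⟩ := v'
  obtain rfl : b = av := h
  obtain rfl : b = av' := h'
  simp only [PathsIn.concat, Quiver.Path.cast_rfl_rfl] at he
  obtain ⟨-, rfl, h3⟩ := PathsIn.mk_inj he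
  have := Quiver.Path.comp_injective_right x (eq_of_heq h3)
  rw [this]

theorem occursIn_mul (PA : IsPathAlgebra k V A) {z₁ z₂ : A} {w : PathsIn V}
    (h : PA.OccursIn w (z₁ * z₂)) :
    ∃ u v, PA.OccursIn u z₁ ∧ PA.OccursIn v z₂ ∧
      ∃ h' : u.2.1 = v.1, w = PathsIn.concat u v h' := by
  rw [OccursIn, expand_mulR] at h
  obtain ⟨u, hu, hne⟩ := Finset.exists_ne_zero_of_sum_ne_zero h
  have h1 : PA.basis.repr (PA.basis u * z₂) w ≠ 0 := fun hc => hne (by rw [hc, mul_zero])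
  rw [expand_mulL] at h1
  obtain ⟨v, hv, hne2⟩ := Finset.exists_ne_zero_of_sum_ne_zero h1
  have h2 : PA.basis.repr (PA.basis u * PA.basis v) w ≠ 0 :=
    fun hc => hne2 (by rw [hc, mul_zero])
  by_cases hm : u.2.1 = v.1
  · rw [basis_mul_basis_matched PA u v hm, PA.basis.repr_self] at h2
    have hw : w = PathsIn.concat u v hm := by
      by_contra hne3
      exact h2 (Finsupp.single_eq_of_ne (fun hc => hne3 hc))
    exact ⟨u, v, Finsupp.mem_support_iff.mp hu, Finsupp.mem_support_iff.mp hv, hm, hw⟩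
  · rw [basis_mul_basis_unmatched PA u v hm, map_zero] at h2
    exact absurd rfl h2

theorem repr_mul_basisR (PA : IsPathAlgebra k V A) (z : A) (v u : PathsIn V)
    (h : u.2.1 = v.1) :
    PA.basis.repr (z * PA.basis v) (PathsIn.concat u v h) = PA.basis.repr z u := by
  rw [expand_mulR]
  rw [Finset.sum_eq_single u]
  · rw [basis_mul_basis_matched PA u v h, PA.basis.repr_self, Finsupp.single_eq_same, mul_one]
  · intro u' hu' hne
    by_cases h' : u'.2.1 = v.1
    · rw [basis_mul_basis_matched PA u' v h', PA.basis.repr_self,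
        Finsupp.single_eq_of_ne (fun hc => hne (concat_inj_left h' h hc.symm)), mul_zero]
    · rw [basis_mul_basis_unmatched PA u' v h', map_zero, Finsupp.coe_zero, Pi.zero_apply,
        mul_zero]
  · intro hu
    rw [Finsupp.notMem_support_iff.mp hu, zero_mul]

theorem repr_basisL_mul (PA : IsPathAlgebra k V A) (z : A) (u v : PathsIn V)
    (h : u.2.1 = v.1) :
    PA.basis.repr (PA.basis u * z) (PathsIn.concat u v h) = PA.basis.repr z v := by
  rw [expand_mulL]
  rw [Finset.sum_eq_single v]
  · rw [basis_mul_basis_matched PA u v h, PA.basis.repr_self, Finsupp.single_eq_same, mul_one]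
  · intro v' hv' hne
    by_cases h' : u.2.1 = v'.1
    · rw [basis_mul_basis_matched PA u v' h', PA.basis.repr_self,
        Finsupp.single_eq_of_ne (fun hc => hne (concat_inj_right h' h hc.symm)), mul_zero]
    · rw [basis_mul_basis_unmatched PA u v' h', map_zero, Finsupp.coe_zero, Pi.zero_apply,
        mul_zero]
  · intro hv
    rw [Finsupp.notMem_support_iff.mp hv, zero_mul]

theorem repr_sandwich (PA : IsPathAlgebra k V A) (z : A) (u m v : PathsIn V)
    (h1 : u.2.1 = m.1) (h2 : m.2.1 = v.1) :
    PA.basis.repr (PA.basis u * z * PA.basis v)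
      (PathsIn.concat (PathsIn.concat u m h1) v h2) = PA.basis.repr z m := by
  rw [repr_mul_basisR PA (PA.basis u * z) v (PathsIn.concat u m h1) h2]
  exact repr_basisL_mul PA z u m h1

theorem occursIn_add (PA : IsPathAlgebra k V A) {x y : A} {u : PathsIn V}
    (h : PA.OccursIn u (x + y)) : PA.OccursIn u x ∨ PA.OccursIn u y := by
  rw [OccursIn, map_add, Finsupp.add_apply] at h
  by_contra hc
  push_neg at hc
  obtain ⟨h1, h2⟩ := hc
  rw [OccursIn, not_not] at h1 h2
  exact h (by rw [h1, h2, add_zero])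

theorem occursIn_sub (PA : IsPathAlgebra k V A) {x y : A} {u : PathsIn V}
    (h : PA.OccursIn u (x - y)) : PA.OccursIn u x ∨ PA.OccursIn u y := by
  rw [OccursIn, map_sub, Finsupp.sub_apply] at h
  by_contra hc
  push_neg at hc
  obtain ⟨h1, h2⟩ := hc
  rw [OccursIn, not_not] at h1 h2
  exact h (by rw [h1, h2, sub_zero])

theorem occursIn_neg (PA : IsPathAlgebra k V A) {x : A} {u : PathsIn V}
    (h : PA.OccursIn u (-x)) : PA.OccursIn u x := by
  rw [OccursIn, map_neg, Finsupp.neg_apply, neg_ne_zero] at h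
  exact h

theorem occursIn_smul (PA : IsPathAlgebra k V A) {c : k} {x : A} {u : PathsIn V}
    (h : PA.OccursIn u (c • x)) : PA.OccursIn u x := by
  rw [OccursIn, map_smul, Finsupp.smul_apply] at h
  exact fun hc => h (by rw [hc, smul_zero])

theorem eq_zero_of_no_occurs (PA : IsPathAlgebra k V A) {z : A}
    (h : ∀ u, ¬ PA.OccursIn u z) : z = 0 := by
  have : PA.basis.repr z = 0 := by
    ext u
    have := h u
    rw [OccursIn, not_not] at this
    simpa using this
  have h2 := congrArg PA.basis.repr.symm this
  rwa [PA.basis.repr.symm_apply_apply, map_zero] at h2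

end IsPathAlgebra

end PartB
section PartC
set_option linter.unusedSectionVars false

open Quiver

variable {k : Type} [Field k] {V : Type} [Quiver.{0} V] [Fintype V]
  {A : Type} [Ring A] [Algebra k A]

/-- A set closed under addition, negation and two-sided multiplication. -/
structure IdealLike (A : Type) [Ring A] (S : Set A) : Prop where
  zero_mem : (0 : A) ∈ S
  add_mem : ∀ {x y : A}, x ∈ S → y ∈ S → x + y ∈ S
  neg_mem : ∀ {x : A}, x ∈ S → -x ∈ S
  absorb : ∀ {x : A}, x ∈ S → ∀ r s : A, r * x * s ∈ S

namespace IdealLike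

theorem sub_mem {S : Set A} (hS : IdealLike A S) {x y : A} (hx : x ∈ S) (hy : y ∈ S) :
    x - y ∈ S := by
  rw [sub_eq_add_neg]; exact hS.add_mem hx (hS.neg_mem hy)

theorem smul_mem {S : Set A} (hS : IdealLike A S) (c : k) {x : A}
    (hx : x ∈ S) : c • x ∈ S := by
  have h := hS.absorb hx (algebraMap k A c) 1
  rwa [mul_one, ← Algebra.smul_def] at h

theorem mul_left_mem {S : Set A} (hS : IdealLike A S) (r : A) {x : A} (hx : x ∈ S) :
    r * x ∈ S := by
  have h := hS.absorb hx r 1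
  rwa [mul_one] at h

theorem mul_right_mem {S : Set A} (hS : IdealLike A S) {x : A} (hx : x ∈ S) (s : A) :
    x * s ∈ S := by
  have h := hS.absorb hx 1 s
  rwa [one_mul] at h

end IdealLike

theorem mem_ringIdealSpan_iff {T : Set A} {x : A} :
    x ∈ ringIdealSpan T ↔
      x ∈ AddSubgroup.closure {y : A | ∃ r s : A, ∃ t ∈ T, y = r * t * s} :=
  Iff.rfl

theorem subset_ringIdealSpan (T : Set A) : T ⊆ ringIdealSpan T := by
  intro t ht
  rw [mem_ringIdealSpan_iff]
  exact AddSubgroup.subset_closure ⟨1, 1, t, ht, by rw [one_mul, mul_one]⟩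

theorem idealLike_ringIdealSpan (T : Set A) : IdealLike A (ringIdealSpan T) := by
  constructor
  · exact AddSubgroup.zero_mem _
  · intro x y hx hy
    exact AddSubgroup.add_mem _ hx hy
  · intro x hx
    exact AddSubgroup.neg_mem _ hx
  · intro x hx r s
    rw [mem_ringIdealSpan_iff] at hx ⊢
    induction hx using AddSubgroup.closure_induction generalizing r s with
    | mem y hy =>
        obtain ⟨r0, s0, t, ht, rfl⟩ := hy
        refine AddSubgroup.subset_closure ⟨r * r0, s0 * s, t, ht, ?_⟩
        noncomm_ring
    | zero => simpa using AddSubgroup.zero_mem _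
    | add x y hx hy ihx ihy =>
        have h2 := AddSubgroup.add_mem _ (ihx r s) (ihy r s)
        have heq : r * (x + y) * s = r * x * s + r * y * s := by noncomm_ring
        rwa [heq]
    | neg x hx ihx =>
        have h2 := AddSubgroup.neg_mem _ (ihx r s)
        have heq : r * (-x) * s = -(r * x * s) := by noncomm_ring
        rwa [heq]

end PartC
section PartD
set_option linter.unusedSectionVars false

open Quiver

variable {k : Type} [Field k] {V : Type} [Quiver.{0} V] [Fintype V]
  {A : Type} [Ring A] [Algebra k A]

namespace AdmissibleOrder

theorem finset_max (O : AdmissibleOrder V) (s : Finset (PathsIn V)) (hs : s.Nonempty) :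
    ∃ m ∈ s, ∀ x ∈ s, O.le x m := by
  classical
  induction s using Finset.induction_on with
  | empty => exact absurd hs (by simp)
  | @insert a s hnm ih =>
      rcases s.eq_empty_or_nonempty with rfl | hs'
      · refine ⟨a, Finset.mem_insert_self a _, fun x hx => ?_⟩
        rw [Finset.mem_insert] at hx
        rcases hx with rfl | hx
        · exact O.refl x
        · simp at hx
      · obtain ⟨m, hm, hmax⟩ := ih hs'
        rcases O.total a m with hle | hle
        · refine ⟨m, Finset.mem_insert_of_mem hm, fun x hx => ?_⟩
          rw [Finset.mem_insert] at hx
          rcases hx with rfl | hx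
          · exact hle
          · exact hmax x hx
        · refine ⟨a, Finset.mem_insert_self a _, fun x hx => ?_⟩
          rw [Finset.mem_insert] at hx
          rcases hx with rfl | hx
          · exact O.refl x
          · exact O.trans x m a (hmax x hx) hle

theorem le_concat_right (O : AdmissibleOrder V) {x y : PathsIn V} (h : O.le x y)
    (w : PathsIn V) (hx : w.2.1 = x.1) (hy : w.2.1 = y.1) :
    O.le (PathsIn.concat w x hx) (PathsIn.concat w y hy) := by
  obtain ⟨wa, wb, wp⟩ := w; obtain ⟨xa, xb, xp⟩ := x; obtain ⟨ya, yb, yp⟩ := y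
  obtain rfl : wb = xa := hx
  obtain rfl : wb = ya := hy
  have h2 := O.left_compat _ _ h rfl wa wp
  simpa [PathsIn.concat, Quiver.Path.cast_rfl_rfl] using h2

theorem le_concat_left (O : AdmissibleOrder V) {x y : PathsIn V} (h : O.le x y)
    (w : PathsIn V) (hx : x.2.1 = w.1) (hy : y.2.1 = w.1) :
    O.le (PathsIn.concat x w hx) (PathsIn.concat y w hy) := by
  obtain ⟨wa, wb, wp⟩ := w; obtain ⟨xa, xb, xp⟩ := x; obtain ⟨ya, yb, yp⟩ := y
  obtain rfl : xb = wa := hx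
  obtain rfl : yb = xb := hy
  have h2 := O.right_compat _ _ h rfl wb wp
  simpa [PathsIn.concat, Quiver.Path.cast_rfl_rfl] using h2

end AdmissibleOrder

namespace IsPathAlgebra

theorem exists_isTip (PA : IsPathAlgebra k V A) (O : AdmissibleOrder V) {z : A}
    (hz : z ≠ 0) : ∃ t, IsTip PA O z t := by
  have hne : (PA.basis.repr z).support.Nonempty := by
    rw [Finsupp.support_nonempty_iff]
    intro hc
    apply hz
    have h2 := congrArg PA.basis.repr.symm hc
    rwa [PA.basis.repr.symm_apply_apply, map_zero] at h2
  obtain ⟨m, hm, hmax⟩ := O.finset_max _ hne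
  exact ⟨m, Finsupp.mem_support_iff.mp hm, fun w hw => hmax w (Finsupp.mem_support_iff.mpr hw)⟩

theorem isTip_unique (PA : IsPathAlgebra k V A) (O : AdmissibleOrder V) {z : A}
    {t t' : PathsIn V} (h : IsTip PA O z t) (h' : IsTip PA O z t') : t = t' :=
  O.antisymm t t' (h'.2 t h.1) (h.2 t' h'.1)

theorem isTip_basis (PA : IsPathAlgebra k V A) (O : AdmissibleOrder V) (u : PathsIn V) :
    IsTip PA O (PA.basis u) u := by
  constructor
  · rw [OccursIn, PA.basis.repr_self, Finsupp.single_eq_same]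
    exact one_ne_zero
  · intro w hw
    rw [OccursIn, PA.basis.repr_self] at hw
    have : w = u := by
      by_contra hc
      exact hw (Finsupp.single_eq_of_ne fun h => hc h)
    rw [this]
    exact O.refl u

theorem isTip_basis_eq (PA : IsPathAlgebra k V A) (O : AdmissibleOrder V) {u t : PathsIn V}
    (h : IsTip PA O (PA.basis u) t) : t = u :=
  isTip_unique PA O h (isTip_basis PA O u)

theorem occursIn_basis_eq (PA : IsPathAlgebra k V A) {u t : PathsIn V}
    (h : PA.OccursIn t (PA.basis u)) : t = u := by
  rw [OccursIn, PA.basis.repr_self] at h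
  by_contra hc
  exact h (Finsupp.single_eq_of_ne fun h2 => hc h2)

end IsPathAlgebra

end PartD
section PartE
set_option linter.unusedSectionVars false

open Quiver

variable {k : Type} [Field k] {V : Type} [Quiver.{0} V] [Fintype V]
  {A : Type} [Ring A] [Algebra k A]

namespace IsPathAlgebra

theorem concat_raw {a0 c0 : V} (tg : PathsIn V) (r : Quiver.Path a0 tg.1)
    (s : Quiver.Path tg.2.1 c0) :
    PathsIn.concat (PathsIn.concat ⟨a0, tg.1, r⟩ tg rfl) ⟨tg.2.1, c0, s⟩ rfl =
      ⟨a0, c0, (r.comp tg.2.2).comp s⟩ := by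
  obtain ⟨t1, t2, tp⟩ := tg
  simp [PathsIn.concat, Quiver.Path.cast_rfl_rfl]

theorem redstep (PA : IsPathAlgebra k V A) (O : AdmissibleOrder V) {g : A} {tg : PathsIn V}
    (htg : IsTip PA O g tg) {a0 c0 : V} (r : Quiver.Path a0 tg.1)
    (s : Quiver.Path tg.2.1 c0) (c₀ : k) :
    ∃ h : A,
      (∀ S : Set A, IdealLike A S → g ∈ S → h ∈ S) ∧
      PA.basis.repr h ⟨a0, c0, (r.comp tg.2.2).comp s⟩ = c₀ ∧
      (∀ u, PA.OccursIn u h → O.le u ⟨a0, c0, (r.comp tg.2.2).comp s⟩ ∧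
        ∃ u₀, PA.OccursIn u₀ g ∧ ∃ (h1 : (⟨a0, tg.1, r⟩ : PathsIn V).2.1 = u₀.1)
          (h2 : u₀.2.1 = (⟨tg.2.1, c0, s⟩ : PathsIn V).1),
          u = PathsIn.concat (PathsIn.concat ⟨a0, tg.1, r⟩ u₀ h1) ⟨tg.2.1, c0, s⟩ h2) := by
  refine ⟨(c₀ / PA.basis.repr g tg) •
    (PA.basis ⟨a0, tg.1, r⟩ * g * PA.basis ⟨tg.2.1, c0, s⟩), ?_, ?_, ?_⟩
  · intro S hS hg
    exact hS.smul_mem _ (hS.absorb hg _ _)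
  · rw [← concat_raw tg r s, map_smul, Finsupp.smul_apply,
      repr_sandwich PA g ⟨a0, tg.1, r⟩ tg ⟨tg.2.1, c0, s⟩ rfl rfl, smul_eq_mul,
      div_mul_cancel₀ c₀ htg.1]
  · intro u hu
    have hu' := occursIn_smul PA hu
    obtain ⟨u₁, v, hu₁, hv, h', hshape⟩ := occursIn_mul PA hu'
    have hv' := occursIn_basis_eq PA hv
    subst hv'
    obtain ⟨w₁, u₀, hw₁, hu₀, h1, hshape1⟩ := occursIn_mul PA hu₁
    have hw₁' := occursIn_basis_eq PA hw₁
    subst hw₁'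
    subst hshape1
    subst hshape
    constructor
    · rw [← concat_raw tg r s]
      exact O.le_concat_left
        (O.le_concat_right (htg.2 u₀ hu₀) ⟨a0, tg.1, r⟩ h1 rfl) ⟨tg.2.1, c0, s⟩ h' rfl
    · exact ⟨u₀, hu₀, h1, h', rfl⟩

theorem reduce (PA : IsPathAlgebra k V A) (O : AdmissibleOrder V) {S : Set A}
    (hS : IdealLike A S) {Red : Set A} (hRed : Red ⊆ S) (z : A) :
    ∃ z', z - z' ∈ S ∧ ∀ u, PA.OccursIn u z' →
      ∀ g ∈ Red, ∀ tg, IsTip PA O g tg → ¬ tg.Divides u := by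
  classical
  suffices H : ∀ t : PathsIn V, ∀ z : A, (∀ u, PA.OccursIn u z → O.le u t) →
      ∃ z', z - z' ∈ S ∧ ∀ u, PA.OccursIn u z' →
        ∀ g ∈ Red, ∀ tg, IsTip PA O g tg → ¬ tg.Divides u by
    by_cases hz0 : z = 0
    · exact ⟨0, by simp [hz0, hS.zero_mem], fun u hu => absurd hu (by simp [OccursIn])⟩
    · obtain ⟨tz, htz⟩ := exists_isTip PA O hz0
      exact H tz z htz.2
  intro t
  refine WellFounded.induction (C := fun t => ∀ z : A,
    (∀ u, PA.OccursIn u z → O.le u t) →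
      ∃ z', z - z' ∈ S ∧ ∀ u, PA.OccursIn u z' →
        ∀ g ∈ Red, ∀ tg, IsTip PA O g tg → ¬ tg.Divides u) O.wf t ?_
  intro t IH z hbound
  by_cases hz0 : z = 0
  · exact ⟨0, by simp [hz0, hS.zero_mem], fun u hu => absurd hu (by simp [OccursIn])⟩
  obtain ⟨tz, htz⟩ := exists_isTip PA O hz0
  by_cases hbad : ∃ g ∈ Red, ∃ tg, IsTip PA O g tg ∧ tg.Divides tz
  · obtain ⟨g, hgRed, tg, htg, hdiv⟩ := hbad
    obtain ⟨a0, c0, r, s, hw⟩ := hdiv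
    subst hw
    obtain ⟨h, hmem, hcoef, hocc⟩ :=
      redstep PA O htg r s (PA.basis.repr z ⟨a0, c0, (r.comp tg.2.2).comp s⟩)
    have hhS : h ∈ S := hmem S hS (hRed hgRed)
    have hz₂top : PA.basis.repr (z - h) ⟨a0, c0, (r.comp tg.2.2).comp s⟩ = 0 := by
      rw [map_sub, Finsupp.sub_apply, hcoef, sub_self]
    have hz₂bound : ∀ u, PA.OccursIn u (z - h) →
        O.le u ⟨a0, c0, (r.comp tg.2.2).comp s⟩ := by
      intro u hu
      rcases occursIn_sub PA hu with h1 | h1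
      · exact htz.2 u h1
      · exact (hocc u h1).1
    by_cases hz₂0 : z - h = 0
    · refine ⟨0, ?_, fun u hu => absurd hu (by simp [OccursIn])⟩
      have : z = h := by rwa [sub_eq_zero] at hz₂0
      rw [sub_zero, this]
      exact hhS
    · obtain ⟨t₂, ht₂⟩ := exists_isTip PA O hz₂0
      have hne : t₂ ≠ ⟨a0, c0, (r.comp tg.2.2).comp s⟩ := by
        intro hc
        apply ht₂.1
        rw [hc]
        exact hz₂top
      have hlt : O.le t₂ t ∧ t₂ ≠ t := by
        have hle1 : O.le t₂ ⟨a0, c0, (r.comp tg.2.2).comp s⟩ := hz₂bound t₂ ht₂.1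
        have hle2 : O.le (⟨a0, c0, (r.comp tg.2.2).comp s⟩ : PathsIn V) t :=
          hbound _ htz.1
        refine ⟨O.trans _ _ _ hle1 hle2, ?_⟩
        intro hc
        subst hc
        exact hne (O.antisymm _ _ hle1 hle2)
      obtain ⟨z₂', hz₂'S, hz₂'good⟩ := IH t₂ hlt (z - h) (fun u hu => ht₂.2 u hu)
      refine ⟨z₂', ?_, hz₂'good⟩
      have heq : z - z₂' = (z - h) - z₂' + h := by abel
      rw [heq]
      exact hS.add_mem hz₂'S hhS
  · push_neg at hbad
    set c := PA.basis.repr z tz with hc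
    set b0 := c • PA.basis tz with hb0
    have hz₂top : PA.basis.repr (z - b0) tz = 0 := by
      rw [map_sub, Finsupp.sub_apply, hb0, map_smul, Finsupp.smul_apply,
        PA.basis.repr_self, Finsupp.single_eq_same, smul_eq_mul, mul_one, hc, sub_self]
    have hb0occ : ∀ u, PA.OccursIn u b0 → u = tz := by
      intro u hu
      exact occursIn_basis_eq PA (occursIn_smul PA hu)
    have hz₂bound : ∀ u, PA.OccursIn u (z - b0) → O.le u tz := by
      intro u hu
      rcases occursIn_sub PA hu with h1 | h1
      · exact htz.2 u h1
      · rw [hb0occ u h1]; exact O.refl tz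
    by_cases hz₂0 : z - b0 = 0
    · refine ⟨z, by simp [hS.zero_mem], ?_⟩
      intro u hu g hg tg htg hdiv
      have hz : z = b0 := by rwa [sub_eq_zero] at hz₂0
      rw [hz] at hu
      rw [hb0occ u hu] at hdiv
      exact hbad g hg tg htg hdiv
    · obtain ⟨t₂, ht₂⟩ := exists_isTip PA O hz₂0
      have hne : t₂ ≠ tz := by
        intro hc
        apply ht₂.1
        rw [hc]
        exact hz₂top
      have hlt : O.le t₂ t ∧ t₂ ≠ t := by
        have hle1 : O.le t₂ tz := hz₂bound t₂ ht₂.1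
        have hle2 : O.le tz t := hbound _ htz.1
        refine ⟨O.trans _ _ _ hle1 hle2, ?_⟩
        intro hc
        subst hc
        exact hne (O.antisymm _ _ hle1 hle2)
      obtain ⟨z₂', hz₂'S, hz₂'good⟩ := IH t₂ hlt (z - b0) (fun u hu => ht₂.2 u hu)
      refine ⟨z₂' + b0, ?_, ?_⟩
      · have heq : z - (z₂' + b0) = (z - b0) - z₂' := by abel
        rw [heq]
        exact hz₂'S
      · intro u hu g hg tg htg hdiv
        rcases occursIn_add PA hu with h1 | h1
        · exact hz₂'good u h1 g hg tg htg hdiv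
        · rw [hb0occ u h1] at hdiv
          exact hbad g hg tg htg hdiv

end IsPathAlgebra

end PartE
section PartF1
set_option linter.unusedSectionVars false
set_option maxHeartbeats 1000000

open Quiver IsPathAlgebra

variable {k : Type} [Field k] {V : Type} [Quiver.{0} V] [Fintype V]
  {A : Type} [Ring A] [Algebra k A]

/-- `u` is not divisible by the tip of any element of `G`. -/
def NontipG (PA : IsPathAlgebra k V A) (O : AdmissibleOrder V) (G : Set A)
    (u : PathsIn V) : Prop :=
  ∀ g ∈ G, ∀ tg, IsTip PA O g tg → ¬ tg.Divides u

/-- The coordinate projection onto the span of paths satisfying `pr`. -/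
noncomputable def filterBy (PA : IsPathAlgebra k V A) (pr : PathsIn V → Prop)
    (z : A) : A := by
  classical
  exact PA.basis.repr.symm ((PA.basis.repr z).filter (fun u => pr u))

section FilterBy

variable (PA : IsPathAlgebra k V A) (pr : PathsIn V → Prop)

theorem filterBy_apply_pos {u : PathsIn V} (h : pr u) (z : A) :
    PA.basis.repr (filterBy PA pr z) u = PA.basis.repr z u := by
  classical
  rw [filterBy]
  simp only [LinearEquiv.apply_symm_apply]
  exact Finsupp.filter_apply_pos _ _ h

theorem filterBy_apply_neg {u : PathsIn V} (h : ¬ pr u) (z : A) :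
    PA.basis.repr (filterBy PA pr z) u = 0 := by
  classical
  rw [filterBy]
  simp only [LinearEquiv.apply_symm_apply]
  exact Finsupp.filter_apply_neg _ _ h

theorem filterBy_sub (x y : A) :
    filterBy PA pr (x - y) = filterBy PA pr x - filterBy PA pr y := by
  apply PA.basis.repr.injective
  ext u
  by_cases h : pr u
  · rw [map_sub, Finsupp.sub_apply, filterBy_apply_pos PA pr h,
      filterBy_apply_pos PA pr h, filterBy_apply_pos PA pr h, map_sub, Finsupp.sub_apply]
  · rw [map_sub, Finsupp.sub_apply, filterBy_apply_neg PA pr h,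
      filterBy_apply_neg PA pr h, filterBy_apply_neg PA pr h, sub_zero]

theorem filterBy_zero : filterBy PA pr (0 : A) = 0 := by
  apply PA.basis.repr.injective
  ext u
  by_cases h : pr u
  · rw [filterBy_apply_pos PA pr h, map_zero]
  · rw [filterBy_apply_neg PA pr h, map_zero]
    simp

theorem filterBy_eq_self {z : A} (h : ∀ u, PA.OccursIn u z → pr u) :
    filterBy PA pr z = z := by
  apply PA.basis.repr.injective
  ext u
  by_cases hA : pr u
  · rw [filterBy_apply_pos PA pr hA]
  · rw [filterBy_apply_neg PA pr hA]
    by_contra hc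
    exact hA (h u fun h0 => hc h0.symm)

theorem filterBy_eq_zero {z : A} (h : ∀ u, PA.OccursIn u z → ¬ pr u) :
    filterBy PA pr z = 0 := by
  apply PA.basis.repr.injective
  ext u
  rw [map_zero]
  simp only [Finsupp.coe_zero, Pi.zero_apply]
  by_cases hA : pr u
  · rw [filterBy_apply_pos PA pr hA]
    by_contra hc
    exact h u hc hA
  · rw [filterBy_apply_neg PA pr hA]

theorem occursIn_filterBy {z : A} {u : PathsIn V} (h : PA.OccursIn u (filterBy PA pr z)) :
    PA.OccursIn u z ∧ pr u := by
  by_cases hx : pr u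
  · rw [OccursIn, filterBy_apply_pos PA pr hx] at h
    exact ⟨h, hx⟩
  · rw [OccursIn, filterBy_apply_neg PA pr hx] at h
    exact absurd rfl h

end FilterBy

section Main

variable (PA : IsPathAlgebra k V A) (O : AdmissibleOrder V)
  {va vb xp yq : V} (α : va ⟶ vb)
  (p : Quiver.Path xp va) (q : Quiver.Path vb yq)
  (I : Set A) (G : Set A)

theorem nontip_comp_right (hG : IsStrictMonomialGB PA O α I G p q) (a : V)
    (m : Quiver.Path a xp) (hm : NontipG PA O G ⟨a, xp, m⟩) :
    NontipG PA O G ⟨a, va, m.comp p⟩ := by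
  intro g hg tg htg hdiv
  obtain ⟨t1, t2, tp⟩ := tg
  rcases PathsIn.divides_comp_cases hdiv with h1 | h1 | ⟨w, x₁, a₂, b₂, y₂, ha2, hb2, hx, hy, hu⟩
  · exact hm g hg _ htg h1
  · exact (hG.tips_no_divide g hg _ htg).1 h1
  · obtain ⟨rfl, -, h3⟩ := PathsIn.mk_inj hu
    have h3' := eq_of_heq h3
    refine hG.tips_no_overlap_p g hg _ htg ⟨xp, a₂, b₂, y₂, hb2, ?_, ?_⟩
    · rw [h3']
    · rw [hy]

theorem avoids_comp_right (hG : IsStrictMonomialGB PA O α I G p q) (a : V)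
    (m : Quiver.Path a xp) (hm : AvoidsArrow α ⟨a, xp, m⟩) :
    AvoidsArrow α ⟨a, va, m.comp p⟩ := by
  intro hdiv
  rcases PathsIn.divides_comp_cases_of_len_one (arrowPath_len α) hdiv with h1 | h1
  · exact hm h1
  · exact hG.p_avoids h1

theorem nontip_comp_left (hG : IsStrictMonomialGB PA O α I G p q) (c : V)
    (m : Quiver.Path yq c) (hm : NontipG PA O G ⟨yq, c, m⟩) :
    NontipG PA O G ⟨vb, c, q.comp m⟩ := by
  intro g hg tg htg hdiv
  obtain ⟨t1, t2, tp⟩ := tg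
  rcases PathsIn.divides_comp_cases hdiv with h1 | h1 | ⟨w, x₁, a₂, b₂, y₂, ha2, hb2, hx, hy, hu⟩
  · exact (hG.tips_no_divide g hg _ htg).2 h1
  · exact hm g hg _ htg h1
  · obtain ⟨rfl, -, h3⟩ := PathsIn.mk_inj hu
    have h3' := eq_of_heq h3
    refine hG.tips_no_overlap_q g hg _ htg ⟨t1, x₁, a₂, b₂, ha2, ?_, ?_⟩
    · rw [hx]
    · rw [h3']

theorem avoids_comp_left (hG : IsStrictMonomialGB PA O α I G p q) (c : V)
    (m : Quiver.Path yq c) (hm : AvoidsArrow α ⟨yq, c, m⟩) :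
    AvoidsArrow α ⟨vb, c, q.comp m⟩ := by
  intro hdiv
  rcases PathsIn.divides_comp_cases_of_len_one (arrowPath_len α) hdiv with h1 | h1
  · exact hG.q_avoids h1
  · exact hm h1

theorem key_I (hG : IsStrictMonomialGB PA O α I G p q) (v : A) (hv : v ∈ I)
    (hsupp : ∀ u, PA.OccursIn u v → NontipG PA O G u) : v = 0 := by
  by_contra hne
  obtain ⟨g, hg, tg, tz, htg, htz, hdiv⟩ := hG.gb.2 v hv hne
  exact hsupp tz htz.1 g hg tg htg hdiv

theorem main_right (hI : IsAdmissibleIdeal PA I) (hG : IsStrictMonomialGB PA O α I G p q)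
    (S : Set A) (hS : IdealLike A S) (hIS : I ⊆ S)
    (extra : PathsIn V → Prop)
    (hfil : ∀ v : A, (∀ u, PA.OccursIn u v → ¬ extra u) → v ∈ S)
    (hkey : ∀ v ∈ S, (∀ u, PA.OccursIn u v → NontipG PA O G u ∧ extra u) → v = 0)
    (hextra : ∀ (a : V) (m : Quiver.Path a xp), extra ⟨a, xp, m⟩ → extra ⟨a, va, m.comp p⟩)
    (z : A) (hz : z * PA.basis ⟨xp, va, p⟩ ∈ S) :
    z * PA.basis ⟨xp, xp, Quiver.Path.nil⟩ ∈ S := by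
  classical
  have hIdI : IdealLike A I := by rw [hI.1]; exact idealLike_ringIdealSpan I
  have hGI : G ⊆ I := hG.gb.1
  set e : A := PA.basis ⟨xp, xp, Quiver.Path.nil⟩ with he
  set bp : A := PA.basis ⟨xp, va, p⟩ with hbp
  have hepb : e * bp = bp := by
    rw [he, hbp, PA.mul_matched, Quiver.Path.nil_comp]
  have hee : e * e = e := by
    rw [he, PA.mul_matched, Quiver.Path.nil_comp]
  set w : A := z * e with hw
  have hwbp : w * bp = z * bp := by rw [hw, mul_assoc, hepb]
  have hwe : w * e = w := by rw [hw, mul_assoc, hee]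
  obtain ⟨w', hw'I, hw'good⟩ := reduce PA O hIdI hGI w
  set w'' : A := w' * e with hw''
  have hww'' : w - w'' ∈ I := by
    have h1 := hIdI.mul_right_mem hw'I e
    rwa [sub_mul, hwe] at h1
  have hw''supp : ∀ u, PA.OccursIn u w'' → PA.OccursIn u w' ∧ u.2.1 = xp := by
    intro u hu
    obtain ⟨u₁, v, hu₁, hv, h', rfl⟩ := occursIn_mul PA hu
    have hv' := occursIn_basis_eq PA hv
    subst hv'
    rw [PathsIn.concat_nil_right u₁ h']
    exact ⟨hu₁, h'⟩
  set w₃ : A := filterBy PA extra w'' with hw₃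
  have hw₃good : ∀ u, PA.OccursIn u w₃ → NontipG PA O G u ∧ extra u ∧ u.2.1 = xp := by
    intro u hu
    obtain ⟨hu'', hx⟩ := occursIn_filterBy PA extra hu
    obtain ⟨hu', hxp⟩ := hw''supp u hu''
    exact ⟨fun g hg tg htg => hw'good u hu' g hg tg htg, hx, hxp⟩
  have hw4S : w'' - w₃ ∈ S := by
    apply hfil
    intro u hu hx
    rw [OccursIn, map_sub, Finsupp.sub_apply, hw₃, filterBy_apply_pos PA extra hx,
      sub_self] at hu
    exact hu rfl
  have hw₃bpS : w₃ * bp ∈ S := by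
    have h1 : w₃ = w - (w - w'') - (w'' - w₃) := by abel
    have h2 : w₃ * bp = z * bp - (w - w'') * bp - (w'' - w₃) * bp := by
      conv_lhs => rw [h1]
      rw [sub_mul, sub_mul, hwbp]
    rw [h2]
    exact hS.sub_mem (hS.sub_mem hz (hS.mul_right_mem (hIS hww'') bp))
      (hS.mul_right_mem hw4S bp)
  have hw₃bp0 : w₃ * bp = 0 := by
    apply hkey _ hw₃bpS
    intro u hu
    obtain ⟨u₁, v, hu₁, hv, h', rfl⟩ := occursIn_mul PA hu
    have hv' := occursIn_basis_eq PA hv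
    subst hv'
    obtain ⟨hnt, hx, hxp⟩ := hw₃good u₁ hu₁
    obtain ⟨ua, ub, um⟩ := u₁
    obtain rfl : xp = ub := hxp.symm
    have hcc : PathsIn.concat ⟨ua, xp, um⟩ ⟨xp, va, p⟩ h' = ⟨ua, va, um.comp p⟩ := by
      simp [PathsIn.concat, Quiver.Path.cast_rfl_rfl]
    rw [hcc]
    exact ⟨nontip_comp_right PA O α p q I G hG ua um hnt, hextra ua um hx⟩
  have hw₃0 : w₃ = 0 := by
    by_contra hne
    obtain ⟨t, ht⟩ := exists_isTip PA O hne
    obtain ⟨-, -, hxp⟩ := hw₃good t ht.1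
    have h2 : PA.basis.repr (w₃ * bp) (PathsIn.concat t ⟨xp, va, p⟩ hxp) =
        PA.basis.repr w₃ t := repr_mul_basisR PA w₃ _ t hxp
    rw [hw₃bp0, map_zero] at h2
    simp only [Finsupp.coe_zero, Pi.zero_apply] at h2
    exact ht.1 h2.symm
  have hfin : w = (w - w'') + (w'' - w₃) + w₃ := by abel
  show w ∈ S
  rw [hfin]
  exact hS.add_mem (hS.add_mem (hIS hww'') hw4S) (hw₃0 ▸ hS.zero_mem)

theorem main_left (hI : IsAdmissibleIdeal PA I) (hG : IsStrictMonomialGB PA O α I G p q)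
    (S : Set A) (hS : IdealLike A S) (hIS : I ⊆ S)
    (extra : PathsIn V → Prop)
    (hfil : ∀ v : A, (∀ u, PA.OccursIn u v → ¬ extra u) → v ∈ S)
    (hkey : ∀ v ∈ S, (∀ u, PA.OccursIn u v → NontipG PA O G u ∧ extra u) → v = 0)
    (hextra : ∀ (c : V) (m : Quiver.Path yq c), extra ⟨yq, c, m⟩ → extra ⟨vb, c, q.comp m⟩)
    (z : A) (hz : PA.basis ⟨vb, yq, q⟩ * z ∈ S) :
    PA.basis ⟨yq, yq, Quiver.Path.nil⟩ * z ∈ S := by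
  classical
  have hIdI : IdealLike A I := by rw [hI.1]; exact idealLike_ringIdealSpan I
  have hGI : G ⊆ I := hG.gb.1
  set e : A := PA.basis ⟨yq, yq, Quiver.Path.nil⟩ with he
  set bq : A := PA.basis ⟨vb, yq, q⟩ with hbq
  have hqbe : bq * e = bq := by
    rw [he, hbq, PA.mul_matched, Quiver.Path.comp_nil]
  have hee : e * e = e := by
    rw [he, PA.mul_matched, Quiver.Path.nil_comp]
  set w : A := e * z with hw
  have hwbq : bq * w = bq * z := by rw [hw, ← mul_assoc, hqbe]
  have hwe : e * w = w := by rw [hw, ← mul_assoc, hee]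
  obtain ⟨w', hw'I, hw'good⟩ := reduce PA O hIdI hGI w
  set w'' : A := e * w' with hw''
  have hww'' : w - w'' ∈ I := by
    have h1 := hIdI.mul_left_mem e hw'I
    rwa [mul_sub, hwe] at h1
  have hw''supp : ∀ u, PA.OccursIn u w'' → PA.OccursIn u w' ∧ yq = u.1 := by
    intro u hu
    obtain ⟨u₁, v, hu₁, hv, h', rfl⟩ := occursIn_mul PA hu
    have hu₁' := occursIn_basis_eq PA hu₁
    subst hu₁'
    rw [PathsIn.concat_nil_left v h']
    exact ⟨hv, h'⟩
  set w₃ : A := filterBy PA extra w'' with hw₃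
  have hw₃good : ∀ u, PA.OccursIn u w₃ → NontipG PA O G u ∧ extra u ∧ yq = u.1 := by
    intro u hu
    obtain ⟨hu'', hx⟩ := occursIn_filterBy PA extra hu
    obtain ⟨hu', hxp⟩ := hw''supp u hu''
    exact ⟨fun g hg tg htg => hw'good u hu' g hg tg htg, hx, hxp⟩
  have hw4S : w'' - w₃ ∈ S := by
    apply hfil
    intro u hu hx
    rw [OccursIn, map_sub, Finsupp.sub_apply, hw₃, filterBy_apply_pos PA extra hx,
      sub_self] at hu
    exact hu rfl
  have hw₃bqS : bq * w₃ ∈ S := by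
    have h1 : w₃ = w - (w - w'') - (w'' - w₃) := by abel
    have h2 : bq * w₃ = bq * z - bq * (w - w'') - bq * (w'' - w₃) := by
      conv_lhs => rw [h1]
      rw [mul_sub, mul_sub, hwbq]
    rw [h2]
    exact hS.sub_mem (hS.sub_mem hz (hS.mul_left_mem bq (hIS hww'')))
      (hS.mul_left_mem bq hw4S)
  have hw₃bq0 : bq * w₃ = 0 := by
    apply hkey _ hw₃bqS
    intro u hu
    obtain ⟨u₁, v, hu₁, hv, h', rfl⟩ := occursIn_mul PA hu
    have hu₁' := occursIn_basis_eq PA hu₁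
    subst hu₁'
    obtain ⟨hnt, hx, hxp⟩ := hw₃good v hv
    obtain ⟨ua, ub, um⟩ := v
    obtain rfl : yq = ua := hxp
    have hcc : PathsIn.concat ⟨vb, yq, q⟩ ⟨yq, ub, um⟩ h' = ⟨vb, ub, q.comp um⟩ := by
      simp [PathsIn.concat, Quiver.Path.cast_rfl_rfl]
    rw [hcc]
    exact ⟨nontip_comp_left PA O α p q I G hG ub um hnt, hextra ub um hx⟩
  have hw₃0 : w₃ = 0 := by
    by_contra hne
    obtain ⟨t, ht⟩ := exists_isTip PA O hne
    obtain ⟨-, -, hxp⟩ := hw₃good t ht.1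
    have h2 : PA.basis.repr (bq * w₃) (PathsIn.concat ⟨vb, yq, q⟩ t hxp) =
        PA.basis.repr w₃ t := repr_basisL_mul PA w₃ ⟨vb, yq, q⟩ t hxp
    rw [hw₃bq0, map_zero] at h2
    simp only [Finsupp.coe_zero, Pi.zero_apply] at h2
    exact ht.1 h2.symm
  have hfin : w = (w - w'') + (w'' - w₃) + w₃ := by abel
  show w ∈ S
  rw [hfin]
  exact hS.add_mem (hS.add_mem (hIS hww'') hw4S) (hw₃0 ▸ hS.zero_mem)

end Main

end PartF1
section PartF2
set_option linter.unusedSectionVars false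
set_option maxHeartbeats 1600000

open Quiver IsPathAlgebra

variable {k : Type} [Field k] {V : Type} [Quiver.{0} V] [Fintype V]
  {A : Type} [Ring A] [Algebra k A]

section Jmach

variable (PA : IsPathAlgebra k V A) {va vb : V} (α : va ⟶ vb)

theorem occurs_sandwich_alpha (r' s' : A) {u : PathsIn V}
    (hu : PA.OccursIn u (r' * PA.basis (arrowPath α) * s')) :
    (arrowPath α).Divides u := by
  obtain ⟨w₁, u₃, hw₁, hu₃, h', rfl⟩ := occursIn_mul PA hu
  obtain ⟨u₁, v, hu₁, hv, h1, rfl⟩ := occursIn_mul PA hw₁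
  have hv' := occursIn_basis_eq PA hv
  subst hv'
  exact PathsIn.Divides.concat_right
    (PathsIn.Divides.concat_left (PathsIn.Divides.refl _) u₁ h1) u₃ h'

theorem basis_alpha_factor {u : PathsIn V} (h : (arrowPath α).Divides u) :
    ∃ r s : A, PA.basis u = r * PA.basis (arrowPath α) * s := by
  obtain ⟨a0, c0, r, s, hw⟩ := h
  subst hw
  refine ⟨PA.basis ⟨a0, va, r⟩, PA.basis ⟨vb, c0, s⟩, ?_⟩
  rw [basis_mul_basis_matched PA _ _ rfl, basis_mul_basis_matched PA _ _ rfl]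
  exact congrArg PA.basis (concat_raw (arrowPath α) r s).symm

end Jmach

section KeyJ

variable (PA : IsPathAlgebra k V A) (O : AdmissibleOrder V)
  {va vb xp yq : V} (α : va ⟶ vb)
  (p : Quiver.Path xp va) (q : Quiver.Path vb yq)
  (I : Set A) (G : Set A)

theorem key_J (hI : IsAdmissibleIdeal PA I) (hG : IsStrictMonomialGB PA O α I G p q)
    (S : Set A)
    (hsub : ∀ v ∈ S, ∃ m : A, (∀ u, PA.OccursIn u m → (arrowPath α).Divides u) ∧ v - m ∈ I) :
    ∀ v ∈ S, (∀ u, PA.OccursIn u v → NontipG PA O G u ∧ AvoidsArrow α u) → v = 0 := by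
  classical
  have hIdI : IdealLike A I := by rw [hI.1]; exact idealLike_ringIdealSpan I
  have hGI : G ⊆ I := hG.gb.1
  have core : ∀ t : PathsIn V, ∀ i, i ∈ I → (∀ u, PA.OccursIn u i → O.le u t) →
      (filterBy PA (fun u => AvoidsArrow α u) i = 0 ∨
        ∃ u, PA.OccursIn u (filterBy PA (fun u => AvoidsArrow α u) i) ∧
          ¬ NontipG PA O G u) := by
    intro t
    refine WellFounded.induction (C := fun t => ∀ i, i ∈ I →
      (∀ u, PA.OccursIn u i → O.le u t) →
        (filterBy PA (fun u => AvoidsArrow α u) i = 0 ∨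
          ∃ u, PA.OccursIn u (filterBy PA (fun u => AvoidsArrow α u) i) ∧
            ¬ NontipG PA O G u)) O.wf t ?_
    intro t IH i hiI hbound
    by_cases hi0 : i = 0
    · left; rw [hi0]; exact filterBy_zero PA _
    obtain ⟨g, hgG, tg, tz, htg, htz, hdiv⟩ := hG.gb.2 i hiI hi0
    by_cases hα : AvoidsArrow α tz
    · right
      refine ⟨tz, ?_, fun hN => hN g hgG tg htg hdiv⟩
      rw [OccursIn, filterBy_apply_pos PA _ hα]
      exact htz.1
    · obtain ⟨a0, c0, r, s, hw⟩ := hdiv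
      subst hw
      obtain ⟨h, hmem, hcoef, hocc⟩ := redstep PA O htg r s
        (PA.basis.repr i ⟨a0, c0, (r.comp tg.2.2).comp s⟩)
      have hhI : h ∈ I := hmem I hIdI (hGI hgG)
      have hFh : filterBy PA (fun u => AvoidsArrow α u) h = 0 := by
        apply filterBy_eq_zero
        intro u hu hA
        obtain ⟨u₀, hu₀, h1, h2, rfl⟩ := (hocc u hu).2
        apply hA
        by_cases hgp : g = PA.basis (pathPAQ α p q)
        · subst hgp
          have hu₀' : u₀ = pathPAQ α p q := occursIn_basis_eq PA hu₀
          subst hu₀'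
          exact PathsIn.Divides.concat_right
            (PathsIn.Divides.concat_left (arrowPath_divides_pathPAQ α p q) _ h1) _ h2
        · have hgav : PA.ElemAvoids α g := hG.others_avoid g hgG hgp
          have htzα : (arrowPath α).Divides ⟨a0, c0, (r.comp tg.2.2).comp s⟩ :=
            not_not.mp hα
          rcases PathsIn.divides_comp_cases_of_len_one (arrowPath_len α) htzα with hd1 | hd1
          · rcases PathsIn.divides_comp_cases_of_len_one (arrowPath_len α) hd1 with hd2 | hd2
            · exact PathsIn.Divides.concat_right
                (PathsIn.Divides.concat_right hd2 u₀ h1) _ h2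
            · exact absurd hd2 (hgav tg htg.1)
          · exact PathsIn.Divides.concat_left hd1
              (PathsIn.concat ⟨a0, tg.1, r⟩ u₀ h1) h2
      have hFeq : filterBy PA (fun u => AvoidsArrow α u) (i - h) =
          filterBy PA (fun u => AvoidsArrow α u) i := by
        rw [filterBy_sub, hFh, sub_zero]
      have hi₂I : i - h ∈ I := hIdI.sub_mem hiI hhI
      by_cases hi₂0 : i - h = 0
      · left
        rw [← hFeq, hi₂0, filterBy_zero]
      · obtain ⟨t₂, ht₂⟩ := exists_isTip PA O hi₂0
        have htop : PA.basis.repr (i - h) ⟨a0, c0, (r.comp tg.2.2).comp s⟩ = 0 := by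
          rw [map_sub, Finsupp.sub_apply, hcoef, sub_self]
        have hne : t₂ ≠ ⟨a0, c0, (r.comp tg.2.2).comp s⟩ := fun hc =>
          ht₂.1 (by rw [hc]; exact htop)
        have hbound₂ : ∀ u, PA.OccursIn u (i - h) →
            O.le u ⟨a0, c0, (r.comp tg.2.2).comp s⟩ := by
          intro u hu
          rcases occursIn_sub PA hu with h1 | h1
          · exact htz.2 u h1
          · exact (hocc u h1).1
        have hlt : O.le t₂ t ∧ t₂ ≠ t := by
          have hle1 := hbound₂ t₂ ht₂.1
          have hle2 := hbound _ htz.1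
          refine ⟨O.trans _ _ _ hle1 hle2, fun hc => ?_⟩
          subst hc
          exact hne (O.antisymm _ _ hle1 hle2)
        rcases IH t₂ hlt (i - h) hi₂I (fun u hu => ht₂.2 u hu) with hres | hres
        · left; rwa [hFeq] at hres
        · right; rwa [hFeq] at hres
  intro v hvS hsupp
  obtain ⟨m, hmocc, hvmI⟩ := hsub v hvS
  have hFv : filterBy PA (fun u => AvoidsArrow α u) v = v :=
    filterBy_eq_self PA _ (fun u hu => (hsupp u hu).2)
  have hFm : filterBy PA (fun u => AvoidsArrow α u) m = 0 :=
    filterBy_eq_zero PA _ (fun u hu hA => hA (hmocc u hu))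
  have hFvm : filterBy PA (fun u => AvoidsArrow α u) (v - m) = v := by
    rw [filterBy_sub, hFv, hFm, sub_zero]
  by_cases hvm0 : v - m = 0
  · rw [← hFvm, hvm0, filterBy_zero]
  · obtain ⟨t, htp⟩ := exists_isTip PA O hvm0
    rcases core t (v - m) hvmI (fun u hu => htp.2 u hu) with hres | hres
    · rw [← hFvm]; exact hres
    · obtain ⟨u, hu, hN⟩ := hres
      rw [hFvm] at hu
      exact absurd (hsupp u hu).1 hN

end KeyJ

end PartF2
section PartF3
set_option linter.unusedSectionVars false
set_option maxHeartbeats 1600000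

open Quiver IsPathAlgebra

variable {k : Type} [Field k] {V : Type} [Quiver.{0} V] [Fintype V]
  {A : Type} [Ring A] [Algebra k A]
  {Λ : Type} [Ring Λ] [Algebra k Λ]

theorem idealLike_J (PA : IsPathAlgebra k V A) {va vb : V} (α : va ⟶ vb)
    {I : Set A} (P : QuotPresentation k I Λ) :
    IdealLike A {z : A | P.proj z ∈ ringIdealSpan {P.proj (PA.basis (arrowPath α))}} := by
  constructor
  · show P.proj 0 ∈ ringIdealSpan {P.proj (PA.basis (arrowPath α))}
    rw [map_zero]
    exact (idealLike_ringIdealSpan _).zero_mem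
  · intro x y hx hy
    show P.proj (x + y) ∈ ringIdealSpan {P.proj (PA.basis (arrowPath α))}
    rw [map_add]
    exact (idealLike_ringIdealSpan _).add_mem hx hy
  · intro x hx
    show P.proj (-x) ∈ ringIdealSpan {P.proj (PA.basis (arrowPath α))}
    rw [map_neg]
    exact (idealLike_ringIdealSpan _).neg_mem hx
  · intro x hx r s
    show P.proj (r * x * s) ∈ ringIdealSpan {P.proj (PA.basis (arrowPath α))}
    rw [map_mul, map_mul]
    exact (idealLike_ringIdealSpan _).absorb hx _ _

theorem I_subset_J (PA : IsPathAlgebra k V A) {va vb : V} (α : va ⟶ vb)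
    {I : Set A} (P : QuotPresentation k I Λ) :
    I ⊆ {z : A | P.proj z ∈ ringIdealSpan {P.proj (PA.basis (arrowPath α))}} := by
  intro z hz
  show P.proj z ∈ ringIdealSpan {P.proj (PA.basis (arrowPath α))}
  rw [(P.ker z).mpr hz]
  exact (idealLike_ringIdealSpan _).zero_mem

theorem alpha_path_mem_J (PA : IsPathAlgebra k V A) {va vb : V} (α : va ⟶ vb)
    {I : Set A} (P : QuotPresentation k I Λ) {u : PathsIn V}
    (h : (arrowPath α).Divides u) :
    PA.basis u ∈ {z : A | P.proj z ∈ ringIdealSpan {P.proj (PA.basis (arrowPath α))}} := by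
  obtain ⟨r, s, heq⟩ := basis_alpha_factor PA α h
  show P.proj _ ∈ ringIdealSpan {P.proj (PA.basis (arrowPath α))}
  rw [heq, map_mul, map_mul]
  exact (idealLike_ringIdealSpan _).absorb
    (subset_ringIdealSpan _ (Set.mem_singleton _)) _ _

theorem filter_J (PA : IsPathAlgebra k V A) {va vb : V} (α : va ⟶ vb)
    {I : Set A} (P : QuotPresentation k I Λ) (v : A)
    (hv : ∀ u, PA.OccursIn u v → ¬ AvoidsArrow α u) :
    v ∈ {z : A | P.proj z ∈ ringIdealSpan {P.proj (PA.basis (arrowPath α))}} := by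
  have hsp := PA.basis.mem_span_repr_support v
  refine Submodule.span_induction (p := fun x _ =>
    x ∈ {z : A | P.proj z ∈ ringIdealSpan {P.proj (PA.basis (arrowPath α))}})
    ?_ ?_ ?_ ?_ hsp
  · intro x hx
    obtain ⟨u, hu, rfl⟩ := hx
    exact alpha_path_mem_J PA α P
      (not_not.mp (hv u (Finsupp.mem_support_iff.mp hu)))
  · exact (idealLike_J PA α P).zero_mem
  · intro x y hx hy ihx ihy
    exact (idealLike_J PA α P).add_mem ihx ihy
  · intro c x hx ihx
    exact (idealLike_J PA α P).smul_mem c ihx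

theorem exists_m (PA : IsPathAlgebra k V A) {va vb : V} (α : va ⟶ vb)
    {I : Set A} (P : QuotPresentation k I Λ) (v : A)
    (hv : v ∈ {z : A | P.proj z ∈ ringIdealSpan {P.proj (PA.basis (arrowPath α))}}) :
    ∃ m : A, (∀ u, PA.OccursIn u m → (arrowPath α).Divides u) ∧ v - m ∈ I := by
  have hv' : P.proj v ∈ AddSubgroup.closure
      {y : Λ | ∃ r s : Λ, ∃ t ∈ ({P.proj (PA.basis (arrowPath α))} : Set Λ),
        y = r * t * s} := hv
  have claim : ∀ y ∈ AddSubgroup.closure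
      {y : Λ | ∃ r s : Λ, ∃ t ∈ ({P.proj (PA.basis (arrowPath α))} : Set Λ),
        y = r * t * s},
      ∃ m : A, (∀ u, PA.OccursIn u m → (arrowPath α).Divides u) ∧ P.proj m = y := by
    intro y hy
    induction hy using AddSubgroup.closure_induction with
    | mem y hy =>
        obtain ⟨r0, s0, t, ht, rfl⟩ := hy
        rw [Set.mem_singleton_iff] at ht
        subst ht
        obtain ⟨r', hr'⟩ := P.surj r0
        obtain ⟨s', hs'⟩ := P.surj s0
        refine ⟨r' * PA.basis (arrowPath α) * s',
          fun u hu => occurs_sandwich_alpha PA α r' s' hu, ?_⟩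
        rw [map_mul, map_mul, hr', hs']
    | zero => exact ⟨0, fun u hu => absurd hu (by simp [OccursIn]), map_zero _⟩
    | add x y hx hy ihx ihy =>
        obtain ⟨m1, hm1, hPm1⟩ := ihx
        obtain ⟨m2, hm2, hPm2⟩ := ihy
        refine ⟨m1 + m2, fun u hu => ?_, by rw [map_add, hPm1, hPm2]⟩
        rcases occursIn_add PA hu with h1 | h1
        · exact hm1 u h1
        · exact hm2 u h1
    | neg x hx ihx =>
        obtain ⟨m1, hm1, hPm1⟩ := ihx
        exact ⟨-m1, fun u hu => hm1 u (occursIn_neg PA hu), by rw [map_neg, hPm1]⟩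
  obtain ⟨m, hocc, hPm⟩ := claim _ hv'
  refine ⟨m, hocc, (P.ker _).mp ?_⟩
  rw [map_sub, hPm, sub_self]

end PartF3
/-- let `Λ = kQ/I` be a bound quiver algebra such that `I` possesses a strict
`α`-monomial Gröbner basis `𝒢_{p,q}`, and let `Γ = Λ/⟨ᾱ⟩`.  Then right multiplication by
`p` induces isomorphisms of left modules `Λ·𝔰(p) ≅ Λ·p̄` and `Γ·𝔰(p) ≅ Γ·p̄`, and left
multiplication by `q` induces isomorphisms of right modules `𝔱(q)·Λ ≅ q̄·Λ` and
`𝔱(q)·Γ ≅ q̄·Γ` (the maps are the evident surjections, so the content is their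
injectivity, stated elementwise below). -/
theorem mul_by_p_q_injective
    {k : Type} [Field k] {V : Type} [Quiver.{0} V] [Fintype V]
    [∀ a b : V, Fintype (a ⟶ b)]
    {A : Type} [Ring A] [Algebra k A] (PA : IsPathAlgebra k V A)
    (I : Set A) (hI : IsAdmissibleIdeal PA I)
    {Λ : Type} [Ring Λ] [Algebra k Λ] (P : QuotPresentation k I Λ)
    (O : AdmissibleOrder V) {va vb xp yq : V} (α : va ⟶ vb)
    (p : Quiver.Path xp va) (q : Quiver.Path vb yq) (G : Set A)
    (hG : IsStrictMonomialGB PA O α I G p q)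
    {Γ : Type} [Ring Γ] [Algebra k Γ]
    (PΓ : QuotPresentation k (ringIdealSpan {P.proj (PA.basis (arrowPath α))}) Γ) :
    (∀ x y : Λ, x * P.proj (PA.basis ⟨xp, va, p⟩) = y * P.proj (PA.basis ⟨xp, va, p⟩) →
      x * P.proj (PA.basis ⟨xp, xp, Quiver.Path.nil⟩) =
        y * P.proj (PA.basis ⟨xp, xp, Quiver.Path.nil⟩)) ∧
    (∀ x y : Γ, x * PΓ.proj (P.proj (PA.basis ⟨xp, va, p⟩)) =
        y * PΓ.proj (P.proj (PA.basis ⟨xp, va, p⟩)) →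
      x * PΓ.proj (P.proj (PA.basis ⟨xp, xp, Quiver.Path.nil⟩)) =
        y * PΓ.proj (P.proj (PA.basis ⟨xp, xp, Quiver.Path.nil⟩))) ∧
    (∀ x y : Λ, P.proj (PA.basis ⟨vb, yq, q⟩) * x = P.proj (PA.basis ⟨vb, yq, q⟩) * y →
      P.proj (PA.basis ⟨yq, yq, Quiver.Path.nil⟩) * x =
        P.proj (PA.basis ⟨yq, yq, Quiver.Path.nil⟩) * y) ∧
    (∀ x y : Γ, PΓ.proj (P.proj (PA.basis ⟨vb, yq, q⟩)) * x =
        PΓ.proj (P.proj (PA.basis ⟨vb, yq, q⟩)) * y →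
      PΓ.proj (P.proj (PA.basis ⟨yq, yq, Quiver.Path.nil⟩)) * x =
        PΓ.proj (P.proj (PA.basis ⟨yq, yq, Quiver.Path.nil⟩)) * y) := by
  classical
  have hIdI : IdealLike A I := by rw [hI.1]; exact idealLike_ringIdealSpan I
  have hfilI : ∀ v : A, (∀ u, PA.OccursIn u v → ¬ (fun _ : PathsIn V => True) u) → v ∈ I := by
    intro v hv
    have hv0 : v = 0 := PA.eq_zero_of_no_occurs (fun u hu => hv u hu trivial)
    rw [hv0]
    exact hIdI.zero_mem
  have hkeyI : ∀ v ∈ I, (∀ u, PA.OccursIn u v →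
      NontipG PA O G u ∧ (fun _ : PathsIn V => True) u) → v = 0 :=
    fun v hv hs => key_I PA O α p q I G hG v hv (fun u hu => (hs u hu).1)
  have hJideal := idealLike_J PA α P
  have hIJ := I_subset_J PA α P
  have hkeyJ := key_J PA O α p q I G hI hG
    {z : A | P.proj z ∈ ringIdealSpan {P.proj (PA.basis (arrowPath α))}}
    (fun v hv => exists_m PA α P v hv)
  refine ⟨?_, ?_, ?_, ?_⟩
  · intro x y hxy
    obtain ⟨zx, rfl⟩ := P.surj x
    obtain ⟨zy, rfl⟩ := P.surj y
    have h2 : (zx - zy) * PA.basis ⟨xp, va, p⟩ ∈ I := by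
      apply (P.ker _).mp
      rw [map_mul, map_sub, sub_mul, hxy, sub_self]
    have h3 := main_right PA O α p q I G hI hG I hIdI (subset_refl I)
      (fun _ => True) hfilI hkeyI (fun a m _ => trivial) (zx - zy) h2
    have h4 := (P.ker _).mpr h3
    rw [map_mul, map_sub, sub_mul, sub_eq_zero] at h4
    exact h4
  · intro x y hxy
    obtain ⟨x', rfl⟩ := PΓ.surj x
    obtain ⟨zx, rfl⟩ := P.surj x'
    obtain ⟨y', rfl⟩ := PΓ.surj y
    obtain ⟨zy, rfl⟩ := P.surj y'
    have h2 : (zx - zy) * PA.basis ⟨xp, va, p⟩ ∈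
        {z : A | P.proj z ∈ ringIdealSpan {P.proj (PA.basis (arrowPath α))}} := by
      show P.proj _ ∈ ringIdealSpan {P.proj (PA.basis (arrowPath α))}
      apply (PΓ.ker _).mp
      rw [map_mul, map_sub, sub_mul, map_sub, map_mul, map_mul, hxy, sub_self]
    have h3 := main_right PA O α p q I G hI hG _ hJideal hIJ
      (fun u => AvoidsArrow α u)
      (fun v hv => filter_J PA α P v hv)
      hkeyJ
      (fun a m hm => avoids_comp_right PA O α p q I G hG a m hm) (zx - zy) h2
    have h4 := (PΓ.ker (P.proj ((zx - zy) * PA.basis ⟨xp, xp, Quiver.Path.nil⟩))).mpr h3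
    rw [map_mul, map_sub, sub_mul, map_sub, map_mul, map_mul, sub_eq_zero] at h4
    exact h4
  · intro x y hxy
    obtain ⟨zx, rfl⟩ := P.surj x
    obtain ⟨zy, rfl⟩ := P.surj y
    have h2 : PA.basis ⟨vb, yq, q⟩ * (zx - zy) ∈ I := by
      apply (P.ker _).mp
      rw [map_mul, map_sub, mul_sub, hxy, sub_self]
    have h3 := main_left PA O α p q I G hI hG I hIdI (subset_refl I)
      (fun _ => True) hfilI hkeyI (fun c m _ => trivial) (zx - zy) h2
    have h4 := (P.ker _).mpr h3
    rw [map_mul, map_sub, mul_sub, sub_eq_zero] at h4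
    exact h4
  · intro x y hxy
    obtain ⟨x', rfl⟩ := PΓ.surj x
    obtain ⟨zx, rfl⟩ := P.surj x'
    obtain ⟨y', rfl⟩ := PΓ.surj y
    obtain ⟨zy, rfl⟩ := P.surj y'
    have h2 : PA.basis ⟨vb, yq, q⟩ * (zx - zy) ∈
        {z : A | P.proj z ∈ ringIdealSpan {P.proj (PA.basis (arrowPath α))}} := by
      show P.proj _ ∈ ringIdealSpan {P.proj (PA.basis (arrowPath α))}
      apply (PΓ.ker _).mp
      rw [map_mul, map_sub, mul_sub, map_sub, map_mul, map_mul, hxy, sub_self]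
    have h3 := main_left PA O α p q I G hI hG _ hJideal hIJ
      (fun u => AvoidsArrow α u)
      (fun v hv => filter_J PA α P v hv)
      hkeyJ
      (fun c m hm => avoids_comp_left PA O α p q I G hG c m hm) (zx - zy) h2
    have h4 := (PΓ.ker (P.proj (PA.basis ⟨yq, yq, Quiver.Path.nil⟩ * (zx - zy)))).mpr h3
    rw [map_mul, map_sub, mul_sub, map_sub, map_mul, map_mul, sub_eq_zero] at h4
    exact h4
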